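/- For every integer N ≥ 1 there exist dyadic rational numbers A_{mn} (0 ≤ m, n ≤ N) with |A_{mn}| < (3N)! for all m,n, A_{mN} = 0 for all m < N, and A_{NN} = (−1)^N·(2N−1)!!, such that the following identity holds: for every t > 0, every λ > 0, and every complex z ∉ (−∞,0] ∪ [1,∞) at which F_z(z;λ) ≠ 0, (L^N h₀)(z) = (1−z)^{−(2N+1)/2}/((−i t)^N·F_z(z;λ)^N) · Σ_{m,n=0}^{N} A_{mn}·z^{−m}·F_z(z;λ)^{−n}, where h₀(z) := (1−z)^{−1/2}, (L h)(z) := d/dz( −h(z)/(i t·F_z(z;λ)) ), F_z(z;λ) := Log z − Log(1−z) + ln λ, and fractional powers of 1−z are defined via the principal logarithm, (1−z)^{−s} := exp(−s·Log(1−z)). -/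

import Mathlib

noncomputable section

/-- `F_z(z;λ) = Log z − Log(1−z) + ln λ` (principal logarithms). -/
def Fz (lam : ℝ) (z : ℂ) : ℂ :=
  Complex.log z - Complex.log (1 - z) + (Real.log lam : ℂ)

/-- `h₀(z) := (1-z)^{-1/2} := exp(−Log(1−z)/2)`. -/
def h0 (z : ℂ) : ℂ := Complex.exp (-Complex.log (1 - z) / 2)

/-- `(L h)(z) := d/dz(−h(z)/(i t F_z(z;λ)))`. -/
def Lop (t lam : ℝ) (h : ℂ → ℂ) : ℂ → ℂ :=
  fun z => deriv (fun w => -h w / (Complex.I * (t : ℂ) * Fz lam w)) z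

namespace Stmt15


def A : ℕ → ℕ → ℕ → ℚ
  | 0, 0, 0 => 1
  | 0, _, _ => 0
  | N+1, 0, n => (2*N+1)/2 * A N 0 n
  | N+1, m+1, 0 => ((2*N+1)/2 + (m+1)) * A N (m+1) 0 - m * A N m 0
  | N+1, m+1, n+1 => ((2*N+1)/2 + (m+1)) * A N (m+1) (n+1) - m * A N m (n+1)
      - (N + (n+1)) * A N m n

lemma A_zero_of (N m n : ℕ) (h : N < m ∨ m < n) : A N m n = 0 := by
  induction N generalizing m n with
  | zero =>
    match m, n with
    | 0, 0 => omega
    | 0, n+1 => rfl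
    | m+1, n => rfl
  | succ N ih =>
    match m, n with
    | 0, n =>
      have hn : 0 < n := by omega
      rw [A, ih 0 n (by omega)]; ring
    | m+1, 0 =>
      have : N + 1 < m + 1 := by omega
      rw [A, ih (m+1) 0 (by omega), ih m 0 (by omega)]; ring
    | m+1, n+1 =>
      rw [A, ih (m+1) (n+1) (by omega), ih m (n+1) (by omega), ih m n (by omega)]; ring

lemma A_diag (N : ℕ) : A N N N = (-1) ^ N * (Nat.doubleFactorial (2 * N - 1) : ℚ) := by
  induction N with
  | zero => simp [A, Nat.doubleFactorial]
  | succ N ih =>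
    have h1 : A N (N+1) (N+1) = 0 := A_zero_of _ _ _ (by omega)
    have h2 : A N N (N+1) = 0 := A_zero_of _ _ _ (by omega)
    rw [show N + 1 = N + 1 from rfl]
    rw [A, h1, h2, ih]
    have hd : (Nat.doubleFactorial (2 * (N+1) - 1) : ℚ)
        = (2 * N + 1 : ℚ) * (Nat.doubleFactorial (2 * N - 1) : ℚ) := by
      cases N with
      | zero => norm_num [Nat.doubleFactorial]
      | succ K =>
        have : 2 * (K + 1 + 1) - 1 = (2 * (K+1) - 1) + 2 := by omega
        rw [this, Nat.doubleFactorial_add_two]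
        push_cast
        have : (2 * (K+1) - 1 : ℕ) = (2*K+1 : ℕ) := by omega
        rw [this]; push_cast; ring
    rw [hd]; push_cast; ring

lemma A_dyadic (N m n : ℕ) : ∃ b : ℤ, A N m n = (b : ℚ) / 2 ^ N := by
  induction N generalizing m n with
  | zero =>
    match m, n with
    | 0, 0 => exact ⟨1, by norm_num [A]⟩
    | 0, n+1 => exact ⟨0, by norm_num [A_zero_of 0 0 (n+1) (by omega)]⟩
    | m+1, n => exact ⟨0, by norm_num [A_zero_of 0 (m+1) n (by omega)]⟩
  | succ N ih =>
    match m, n with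
    | 0, n =>
      obtain ⟨b, hb⟩ := ih 0 n
      exact ⟨(2*N+1) * b, by rw [A, hb]; push_cast; rw [pow_succ]; ring⟩
    | m+1, 0 =>
      obtain ⟨b1, hb1⟩ := ih (m+1) 0
      obtain ⟨b2, hb2⟩ := ih m 0
      exact ⟨(2*N+1+2*(m+1)) * b1 - 2*m*b2, by rw [A, hb1, hb2]; push_cast; field_simp; ring⟩
    | m+1, n+1 =>
      obtain ⟨b1, hb1⟩ := ih (m+1) (n+1)
      obtain ⟨b2, hb2⟩ := ih m (n+1)
      obtain ⟨b3, hb3⟩ := ih m n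
      exact ⟨(2*N+1+2*(m+1)) * b1 - 2*m*b2 - 2*(N+n+1)*b3, by
        rw [A, hb1, hb2, hb3]; push_cast; field_simp; ring⟩

def B : ℕ → ℚ
  | 0 => 1
  | N+1 => (5 * N + 3) * B N

lemma B_pos (N : ℕ) : 0 < B N := by
  induction N with
  | zero => norm_num [B]
  | succ N ih => rw [B]; positivity

lemma A_abs_le (N m n : ℕ) : |A N m n| ≤ B N := by
  induction N generalizing m n with
  | zero =>
    match m, n with
    | 0, 0 => norm_num [A, B]
    | 0, n+1 => rw [A_zero_of 0 0 (n+1) (by omega)]; norm_num [B]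
    | m+1, n => rw [A_zero_of 0 (m+1) n (by omega)]; norm_num [B]
  | succ N ih =>
    by_cases hz : N + 1 < m ∨ m < n
    · rw [A_zero_of _ _ _ hz]; simpa using (B_pos (N+1)).le
    push_neg at hz
    obtain ⟨hm, hn⟩ := hz
    have hmN : (m : ℚ) ≤ N + 1 := by exact_mod_cast hm
    have hnN : (n : ℚ) ≤ N + 1 := by
      have : n ≤ N + 1 := le_trans hn hm
      exact_mod_cast this
    match m, n with
    | 0, n =>
      rw [A]
      rw [abs_mul]
      calc |(2*(N:ℚ)+1)/2| * |A N 0 n| ≤ (2*N+1)/2 * B N := by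
            apply mul_le_mul _ (ih 0 n) (abs_nonneg _) (by positivity)
            rw [abs_of_nonneg (by positivity)]
          _ ≤ B (N+1) := by
            rw [B]
            have := B_pos N
            nlinarith
    | m+1, 0 =>
      rw [A]
      have h1 : |((2*(N:ℚ)+1)/2 + (m+1)) * A N (m+1) 0| ≤ ((2*N+1)/2 + (m+1)) * B N := by
        rw [abs_mul]
        apply mul_le_mul _ (ih (m+1) 0) (abs_nonneg _) (by positivity)
        rw [abs_of_nonneg (by positivity)]
      have h2 : |(m:ℚ) * A N m 0| ≤ m * B N := by
        rw [abs_mul]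
        apply mul_le_mul _ (ih m 0) (abs_nonneg _) (by positivity)
        rw [abs_of_nonneg (by positivity)]
      calc |((2*(N:ℚ)+1)/2 + (m+1)) * A N (m+1) 0 - m * A N m 0|
          ≤ |((2*(N:ℚ)+1)/2 + (m+1)) * A N (m+1) 0| + |(m:ℚ) * A N m 0| := abs_sub _ _
        _ ≤ ((2*N+1)/2 + (m+1)) * B N + m * B N := add_le_add h1 h2
        _ ≤ B (N+1) := by
            rw [B]
            have := B_pos N
            have hmN' : (m:ℚ) + 1 ≤ N + 1 := by push_cast at hmN ⊢; linarith
            nlinarith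
    | m+1, n+1 =>
      rw [A]
      have h1 : |((2*(N:ℚ)+1)/2 + (m+1)) * A N (m+1) (n+1)| ≤ ((2*N+1)/2 + (m+1)) * B N := by
        rw [abs_mul]
        apply mul_le_mul _ (ih (m+1) (n+1)) (abs_nonneg _) (by positivity)
        rw [abs_of_nonneg (by positivity)]
      have h2 : |(m:ℚ) * A N m (n+1)| ≤ m * B N := by
        rw [abs_mul]
        apply mul_le_mul _ (ih m (n+1)) (abs_nonneg _) (by positivity)
        rw [abs_of_nonneg (by positivity)]
      have h3 : |((N:ℚ) + (n+1)) * A N m n| ≤ ((N:ℚ)+(n+1)) * B N := by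
        rw [abs_mul]
        apply mul_le_mul _ (ih m n) (abs_nonneg _) (by positivity)
        rw [abs_of_nonneg (by positivity)]
      calc |((2*(N:ℚ)+1)/2 + (m+1)) * A N (m+1) (n+1) - m * A N m (n+1) - (N + (n+1)) * A N m n|
          ≤ |((2*(N:ℚ)+1)/2 + (m+1)) * A N (m+1) (n+1) - m * A N m (n+1)| + |((N:ℚ) + (n+1)) * A N m n| := abs_sub _ _
        _ ≤ (|((2*(N:ℚ)+1)/2 + (m+1)) * A N (m+1) (n+1)| + |(m:ℚ) * A N m (n+1)|) + |((N:ℚ) + (n+1)) * A N m n| :=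
            add_le_add (abs_sub _ _) le_rfl
        _ ≤ (((2*N+1)/2 + (m+1)) * B N + m * B N) + ((N:ℚ)+(n+1)) * B N := by
            exact add_le_add (add_le_add h1 h2) h3
        _ ≤ B (N+1) := by
            rw [B]
            have := B_pos N
            have hmN' : (m:ℚ) + 1 ≤ N + 1 := by push_cast at hmN ⊢; linarith
            have hnN' : (n:ℚ) + 1 ≤ N + 1 := by push_cast at hnN ⊢; linarith
            nlinarith

lemma B_lt_factorial (N : ℕ) (hN : 1 ≤ N) : B N < (Nat.factorial (3 * N) : ℚ) := by
  induction N with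
  | zero => omega
  | succ N ih =>
    cases Nat.eq_or_lt_of_le hN with
    | inl h =>
      have : N = 0 := by omega
      subst this
      norm_num [B, Nat.factorial]
    | inr h =>
      have hN1 : 1 ≤ N := by omega
      have ihN := ih hN1
      have hfact : (Nat.factorial (3 * (N+1)) : ℚ)
          = (3*N+3 : ℚ) * (3*N+2) * (3*N+1) * (Nat.factorial (3*N) : ℚ) := by
        have : 3 * (N+1) = (3*N) + 1 + 1 + 1 := by omega
        rw [this, Nat.factorial_succ, Nat.factorial_succ, Nat.factorial_succ]
        push_cast; ring
      rw [B, hfact]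
      have hBpos := B_pos N
      have hfpos : (0:ℚ) < (Nat.factorial (3*N) : ℚ) := by positivity
      have hNn : (0:ℚ) ≤ (N:ℚ) := by positivity
      have c1 : (5*(N:ℚ)+3) * B N < (5*N+3) * (Nat.factorial (3*N) : ℚ) :=
        mul_lt_mul_of_pos_left ihN (by positivity)
      have c2 : (5*(N:ℚ)+3) ≤ (3*N+3)*(3*N+2)*(3*N+1) := by nlinarith [hNn, mul_nonneg hNn hNn, mul_nonneg (mul_nonneg hNn hNn) hNn]
      have c3 := mul_le_mul_of_nonneg_right c2 hfpos.le
      linarith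

lemma key_sum (N : ℕ) (x y : ℂ) :
    ∑ m ∈ Finset.range (N+2), ∑ n ∈ Finset.range (N+2), (A (N+1) m n : ℂ) * x^m * y^n
    = ∑ m ∈ Finset.range (N+1), ∑ n ∈ Finset.range (N+1), (A N m n : ℂ) *
        (((2*(N:ℂ)+1)/2 + m) * (x^m * y^n) - m * (x^(m+1) * y^n)
          - ((N:ℂ)+1+n) * (x^(m+1) * y^(n+1))) := by
  have hL : ∑ m ∈ Finset.range (N+2), ∑ n ∈ Finset.range (N+2), (A (N+1) m n : ℂ) * x^m * y^n
      = (∑ m ∈ Finset.range (N+2), ∑ n ∈ Finset.range (N+2),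
            ((2*(N:ℂ)+1)/2 + m) * (A N m n : ℂ) * x^m * y^n)
        - (∑ m ∈ Finset.range (N+2), ∑ n ∈ Finset.range (N+2),
            (if m = 0 then 0 else ((m:ℂ)-1) * (A N (m-1) n : ℂ) * x^m * y^n))
        - (∑ m ∈ Finset.range (N+2), ∑ n ∈ Finset.range (N+2),
            (if m = 0 ∨ n = 0 then 0 else ((N:ℂ)+n) * (A N (m-1) (n-1) : ℂ) * x^m * y^n)) := by
    rw [← Finset.sum_sub_distrib, ← Finset.sum_sub_distrib]
    refine Finset.sum_congr rfl fun m _ => ?_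
    rw [← Finset.sum_sub_distrib, ← Finset.sum_sub_distrib]
    refine Finset.sum_congr rfl fun n _ => ?_
    match m, n with
    | 0, n => rw [A]; push_cast; ring_nf; simp
    | m+1, 0 => rw [A]; push_cast; simp; ring
    | m+1, n+1 => rw [A]; push_cast; simp; ring
  rw [hL]
  -- first sum: shrink range
  have h1 : (∑ m ∈ Finset.range (N+2), ∑ n ∈ Finset.range (N+2),
        ((2*(N:ℂ)+1)/2 + m) * (A N m n : ℂ) * x^m * y^n)
      = ∑ m ∈ Finset.range (N+1), ∑ n ∈ Finset.range (N+1),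
        ((2*(N:ℂ)+1)/2 + m) * (A N m n : ℂ) * x^m * y^n := by
    rw [Finset.sum_range_succ]
    have hz : (∑ n ∈ Finset.range (N+2),
        ((2*(N:ℂ)+1)/2 + ((N+1:ℕ):ℂ)) * (A N (N+1) n : ℂ) * x^(N+1) * y^n) = 0 :=
      Finset.sum_eq_zero fun n _ => by rw [A_zero_of N (N+1) n (by omega)]; push_cast; ring
    rw [hz, add_zero]
    refine Finset.sum_congr rfl fun m hm => ?_
    rw [Finset.sum_range_succ, A_zero_of N m (N+1) (by simp at hm; omega)]
    push_cast; ring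
  -- second sum: peel m = 0
  have h2 : (∑ m ∈ Finset.range (N+2), ∑ n ∈ Finset.range (N+2),
        (if m = 0 then 0 else ((m:ℂ)-1) * (A N (m-1) n : ℂ) * x^m * y^n))
      = ∑ m ∈ Finset.range (N+1), ∑ n ∈ Finset.range (N+1),
        (m:ℂ) * (A N m n : ℂ) * x^(m+1) * y^n := by
    rw [Finset.sum_range_succ']
    simp only [Nat.succ_ne_zero, if_false, if_true, eq_self_iff_true, Nat.add_sub_cancel,
      Finset.sum_const_zero, add_zero]
    refine Finset.sum_congr rfl fun m hm => ?_
    rw [Finset.sum_range_succ, A_zero_of N m (N+1) (by simp at hm; omega)]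
    simp
  -- third sum: peel m = 0 and n = 0
  have h3 : (∑ m ∈ Finset.range (N+2), ∑ n ∈ Finset.range (N+2),
        (if m = 0 ∨ n = 0 then 0 else ((N:ℂ)+n) * (A N (m-1) (n-1) : ℂ) * x^m * y^n))
      = ∑ m ∈ Finset.range (N+1), ∑ n ∈ Finset.range (N+1),
        ((N:ℂ)+1+n) * (A N m n : ℂ) * x^(m+1) * y^(n+1) := by
    rw [Finset.sum_range_succ']
    simp only [Nat.succ_ne_zero, false_or, if_false, if_true, eq_self_iff_true, true_or, or_true,
      Nat.add_sub_cancel, Finset.sum_const_zero, add_zero]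
    refine Finset.sum_congr rfl fun m _ => ?_
    rw [Finset.sum_range_succ']
    simp only [Nat.succ_ne_zero, false_or, if_false, if_true, eq_self_iff_true, true_or, or_true,
      Nat.add_sub_cancel, Finset.sum_const_zero, add_zero]
    refine Finset.sum_congr rfl fun n _ => ?_
    push_cast; ring
  rw [h1, h2, h3]
  rw [← Finset.sum_sub_distrib, ← Finset.sum_sub_distrib]
  refine Finset.sum_congr rfl fun m _ => ?_
  rw [← Finset.sum_sub_distrib, ← Finset.sum_sub_distrib]
  refine Finset.sum_congr rfl fun n _ => ?_
  ring



def cN (N : ℕ) : ℂ := -(((2 * N + 1 : ℕ) : ℂ) / 2)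

def Sf (lam : ℝ) (N : ℕ) (z : ℂ) : ℂ :=
  ∑ m ∈ Finset.range (N + 1), ∑ n ∈ Finset.range (N + 1),
    (A N m n : ℂ) * z ^ (-(m : ℤ)) * Fz lam z ^ (-(n : ℤ))

def U (lam : ℝ) : Set ℂ :=
  {z | z ∈ Complex.slitPlane ∧ (1 - z) ∈ Complex.slitPlane ∧ Fz lam z ≠ 0}

lemma zpow_neg_nat (w : ℂ) (m : ℕ) : w ^ (-(m:ℤ)) = (w⁻¹)^m := by
  rw [zpow_neg, ← inv_zpow, zpow_natCast]

lemma zpow_neg_nat_sub_one (w : ℂ) (m : ℕ) : w ^ (-(m:ℤ)-1) = (w⁻¹)^(m+1) := by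
  rw [show (-(m:ℤ)-1) = -((m+1:ℕ):ℤ) by push_cast; ring, zpow_neg_nat]

lemma Sf_eq_pow (lam : ℝ) (N : ℕ) (z : ℂ) :
    Sf lam N z = ∑ m ∈ Finset.range (N + 1), ∑ n ∈ Finset.range (N + 1),
      (A N m n : ℂ) * (z⁻¹)^m * ((Fz lam z)⁻¹)^n := by
  unfold Sf
  simp only [zpow_neg_nat]

lemma Sf_succ_eq_pow (lam : ℝ) (N : ℕ) (z : ℂ) :
    Sf lam (N+1) z = ∑ m ∈ Finset.range (N + 2), ∑ n ∈ Finset.range (N + 2),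
      (A (N+1) m n : ℂ) * (z⁻¹)^m * ((Fz lam z)⁻¹)^n := by
  rw [Sf_eq_pow]

lemma hasDerivAt_log_one_sub {z : ℂ} (h2 : (1 - z) ∈ Complex.slitPlane) :
    HasDerivAt (fun w => Complex.log (1 - w)) ((1-z)⁻¹ * -1) z :=
  (Complex.hasDerivAt_log h2).comp z ((hasDerivAt_id z).const_sub 1)

lemma hasDerivAt_Fz (lam : ℝ) {z : ℂ} (h1 : z ∈ Complex.slitPlane)
    (h2 : (1 - z) ∈ Complex.slitPlane) :
    HasDerivAt (Fz lam) (z⁻¹ + (1-z)⁻¹) z := by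
  have h := ((Complex.hasDerivAt_log h1).sub (hasDerivAt_log_one_sub h2)).add_const
    ((Real.log lam : ℂ))
  exact h.congr_deriv (by ring)

lemma hasDerivAt_Fz_zpow (lam : ℝ) (k : ℤ) {z : ℂ} (h1 : z ∈ Complex.slitPlane)
    (h2 : (1 - z) ∈ Complex.slitPlane) (hf : Fz lam z ≠ 0) :
    HasDerivAt (fun w => Fz lam w ^ k)
      ((k : ℂ) * Fz lam z ^ (k-1) * (z⁻¹ + (1-z)⁻¹)) z :=
  (hasDerivAt_zpow k (Fz lam z) (Or.inl hf)).comp z (hasDerivAt_Fz lam h1 h2)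

lemma hasDerivAt_P (c : ℂ) {z : ℂ} (h2 : (1 - z) ∈ Complex.slitPlane) :
    HasDerivAt (fun w => Complex.exp (c * Complex.log (1 - w)))
      (Complex.exp (c * Complex.log (1 - z)) * (c * ((1-z)⁻¹ * -1))) z :=
  ((hasDerivAt_log_one_sub h2).const_mul c).cexp

/-- Main derivative step. -/
lemma Hstep (lam : ℝ) (N : ℕ) {z : ℂ} (h1 : z ∈ Complex.slitPlane)
    (h2 : (1 - z) ∈ Complex.slitPlane) (hf : Fz lam z ≠ 0) :
    HasDerivAt (fun w => Complex.exp (cN N * Complex.log (1 - w))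
        * Fz lam w ^ (-(N:ℤ)-1) * Sf lam N w)
      (Complex.exp (cN (N+1) * Complex.log (1 - z))
        * Fz lam z ^ (-(N:ℤ)-1) * Sf lam (N+1) z) z := by
  have hz0 : z ≠ 0 := Complex.slitPlane_ne_zero h1
  have h1z : (1 : ℂ) - z ≠ 0 := Complex.slitPlane_ne_zero h2
  set x := z⁻¹ with hxdef
  set y := (Fz lam z)⁻¹ with hydef
  have hzx : z * x = 1 := mul_inv_cancel₀ hz0
  have h1zinv : (1 - z) * (1 - z)⁻¹ = 1 := mul_inv_cancel₀ h1z
  have hphiy : Fz lam z * y = 1 := mul_inv_cancel₀ hf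
  -- derivative of the double sum
  have hS : HasDerivAt (Sf lam N)
      (∑ m ∈ Finset.range (N + 1), ∑ n ∈ Finset.range (N + 1),
        ((A N m n : ℂ) * ((Int.cast (-(m:ℤ)) : ℂ) * z ^ (-(m:ℤ) - 1)) * Fz lam z ^ (-(n:ℤ))
          + (A N m n : ℂ) * z ^ (-(m:ℤ))
            * ((Int.cast (-(n:ℤ)) : ℂ) * Fz lam z ^ (-(n:ℤ) - 1) * (z⁻¹ + (1-z)⁻¹)))) z := by
    apply HasDerivAt.fun_sum
    intro m _
    apply HasDerivAt.fun_sum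
    intro n _
    exact ((hasDerivAt_zpow (-(m:ℤ)) z (Or.inl hz0)).const_mul ((A N m n : ℂ))).mul
      (hasDerivAt_Fz_zpow lam (-(n:ℤ)) h1 h2 hf)
  have hP := hasDerivAt_P (cN N) h2
  have hQ := hasDerivAt_Fz_zpow lam (-(N:ℤ)-1) h1 h2 hf
  have hraw := (hP.mul hQ).mul hS
  refine HasDerivAt.congr_deriv hraw (Eq.symm ?_)
  simp only [Pi.mul_apply]
  -- now prove the value identity
  set E := Complex.exp (cN N * Complex.log (1 - z)) with hEdef
  set e := Complex.exp (cN (N+1) * Complex.log (1 - z)) with hedef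
  set p := Fz lam z ^ (-(N:ℤ)-1) with hpdef
  have hc : cN N = cN (N+1) + 1 := by
    simp only [cN]; push_cast; ring
  have fE : E = e * (1 - z) := by
    rw [hEdef, hedef, hc, add_mul, one_mul, Complex.exp_add, Complex.exp_log h1z]
  have hp2 : Fz lam z ^ (-(N:ℤ)-1-1) = p * y := by
    rw [hpdef, hydef, zpow_sub_one₀ hf]
  -- the sum value in monomial form
  have claim1 : (1 - z) * (∑ m ∈ Finset.range (N + 1), ∑ n ∈ Finset.range (N + 1),
        ((A N m n : ℂ) * ((Int.cast (-(m:ℤ)) : ℂ) * z ^ (-(m:ℤ) - 1)) * Fz lam z ^ (-(n:ℤ))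
          + (A N m n : ℂ) * z ^ (-(m:ℤ))
            * ((Int.cast (-(n:ℤ)) : ℂ) * Fz lam z ^ (-(n:ℤ) - 1) * (z⁻¹ + (1-z)⁻¹))))
      = ∑ m ∈ Finset.range (N + 1), ∑ n ∈ Finset.range (N + 1),
        (A N m n : ℂ) * ((m:ℂ) * (x^m - x^(m+1)) * y^n - (n:ℂ) * (x^(m+1) * y^(n+1))) := by
    rw [Finset.mul_sum]
    refine Finset.sum_congr rfl fun m _ => ?_
    rw [Finset.mul_sum]
    refine Finset.sum_congr rfl fun n _ => ?_
    rw [zpow_neg_nat_sub_one z m, zpow_neg_nat z m, zpow_neg_nat_sub_one (Fz lam z) n,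
      zpow_neg_nat (Fz lam z) n, ← hxdef, ← hydef]
    push_cast
    rw [pow_succ x m, pow_succ y n]
    linear_combination ((A N m n : ℂ) * (m:ℂ) * x^m * y^n
        + (A N m n : ℂ) * (n:ℂ) * x^m * y^n * y) * hzx
      - (A N m n : ℂ) * (n:ℂ) * x^m * y^n * y * h1zinv
  -- the target sum via key_sum
  have claim2 : Sf lam (N+1) z = ∑ m ∈ Finset.range (N+1), ∑ n ∈ Finset.range (N+1),
      (A N m n : ℂ) * (((2*(N:ℂ)+1)/2 + m) * (x^m * y^n) - m * (x^(m+1) * y^n)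
        - ((N:ℂ)+1+n) * (x^(m+1) * y^(n+1))) := by
    rw [Sf_succ_eq_pow, ← hxdef, ← hydef, key_sum]
  have hcNval : -(cN N) = (2*(N:ℂ)+1)/2 := by simp only [cN]; push_cast; ring
  have claim3 : ∑ m ∈ Finset.range (N+1), ∑ n ∈ Finset.range (N+1),
      (A N m n : ℂ) * (((2*(N:ℂ)+1)/2 + m) * (x^m * y^n) - m * (x^(m+1) * y^n)
        - ((N:ℂ)+1+n) * (x^(m+1) * y^(n+1)))
    = (-(cN N)) * Sf lam N z - ((N:ℂ)+1) * (x * y * Sf lam N z)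
      + ∑ m ∈ Finset.range (N + 1), ∑ n ∈ Finset.range (N + 1),
        (A N m n : ℂ) * ((m:ℂ) * (x^m - x^(m+1)) * y^n - (n:ℂ) * (x^(m+1) * y^(n+1))) := by
    rw [hcNval, Sf_eq_pow lam N z, ← hxdef, ← hydef]
    simp only [Finset.mul_sum]
    rw [← Finset.sum_sub_distrib, ← Finset.sum_add_distrib]
    refine Finset.sum_congr rfl fun m _ => ?_
    rw [← Finset.sum_sub_distrib, ← Finset.sum_add_distrib]
    refine Finset.sum_congr rfl fun n _ => ?_
    rw [pow_succ x m, pow_succ y n]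
    ring
  rw [claim2, claim3]
  -- final scalar identity
  rw [hp2, fE]
  have hcast : ((-(N:ℤ) - 1 : ℤ) : ℂ) = -(N:ℂ) - 1 := by push_cast; ring
  rw [hcast]
  have hφ' : (1 - z) * (z⁻¹ + (1-z)⁻¹) = x := by
    linear_combination h1zinv - hzx
  linear_combination (e * ((N:ℂ) + 1) * p * y * Sf lam N z) * hφ'
    - (e * p) * claim1
    + (e * cN N * p * Sf lam N z) * h1zinv

lemma U_eventually (lam : ℝ) {z : ℂ} (hz : z ∈ U lam) : ∀ᶠ w in nhds z, w ∈ U lam := by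
  have hopen : IsOpen {w : ℂ | w ∈ Complex.slitPlane ∧ (1 - w) ∈ Complex.slitPlane} :=
    Complex.isOpen_slitPlane.inter
      (Complex.isOpen_slitPlane.preimage (continuous_const.sub continuous_id))
  have hcont : ContinuousAt (Fz lam) z := by
    have l1 : ContinuousAt Complex.log z := continuousAt_clog hz.1
    have l2 : ContinuousAt (fun w => Complex.log (1 - w)) z :=
      (continuousAt_clog hz.2.1).comp ((continuous_const.sub continuous_id).continuousAt)
    exact (l1.sub l2).add continuousAt_const
  have h1 : ∀ᶠ w in nhds z, w ∈ Complex.slitPlane ∧ (1 - w) ∈ Complex.slitPlane :=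
    hopen.eventually_mem ⟨hz.1, hz.2.1⟩
  have h2 : ∀ᶠ w in nhds z, Fz lam w ≠ 0 := hcont.eventually_ne hz.2.2
  filter_upwards [h1, h2] with w hw hne
  exact ⟨hw.1, hw.2, hne⟩

lemma iter_formula (t lam : ℝ) (ht : t ≠ 0) (N : ℕ) {z : ℂ} (hz : z ∈ U lam) :
    (Lop t lam)^[N] h0 z
      = Complex.exp (cN N * Complex.log (1 - z))
          * (((-Complex.I * (t:ℂ)) ^ N)⁻¹ * Fz lam z ^ (-(N:ℤ))) * Sf lam N z := by
  induction N generalizing z with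
  | zero =>
    have hSf : Sf lam 0 z = 1 := by simp [Sf, A]
    rw [hSf]
    simp only [Function.iterate_zero, id_eq, pow_zero, inv_one, Nat.cast_zero, neg_zero,
      zpow_zero, mul_one, one_mul]
    show Complex.exp (-Complex.log (1 - z) / 2) = _
    rw [show cN 0 * Complex.log (1 - z) = -Complex.log (1 - z) / 2 by
      simp [cN]; ring]
  | succ N ih =>
    have hz' := hz
    obtain ⟨hz1, hz2, hzf⟩ := hz
    have hUz := U_eventually lam hz'
    rw [Function.iterate_succ_apply']
    show deriv (fun w => -((Lop t lam)^[N] h0 w) / (Complex.I * (t:ℂ) * Fz lam w)) z = _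
    have heq : (fun w => -((Lop t lam)^[N] h0 w) / (Complex.I * (t:ℂ) * Fz lam w))
        =ᶠ[nhds z] (fun w => ((-Complex.I * (t:ℂ)) ^ (N+1))⁻¹
          * (Complex.exp (cN N * Complex.log (1 - w)) * Fz lam w ^ (-(N:ℤ)-1) * Sf lam N w)) := by
      filter_upwards [hUz] with w hw
      rw [ih hw]
      have hfw : Fz lam w ≠ 0 := hw.2.2
      have hI : Complex.I * (t:ℂ) ≠ 0 :=
        mul_ne_zero Complex.I_ne_zero (by exact_mod_cast ht)
      have hIt : (-Complex.I * (t:ℂ)) ≠ 0 := by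
        rw [neg_mul]; exact neg_ne_zero.mpr hI
      rw [div_eq_iff (mul_ne_zero hI hfw)]
      rw [show (-(N:ℤ)-1) = (-(N:ℤ)) - 1 from rfl, zpow_sub_one₀ hfw (-(N:ℤ))]
      rw [pow_succ, mul_inv]
      have h4 : (-Complex.I*(t:ℂ))⁻¹ * (Complex.I * (t:ℂ)) = -1 := by
        rw [neg_mul, inv_neg, neg_mul, inv_mul_cancel₀ hI]
      have e3' : (Fz lam w)⁻¹ * Fz lam w = 1 := inv_mul_cancel₀ hfw
      linear_combination (-(((-Complex.I*(t:ℂ))^N)⁻¹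
          * Complex.exp (cN N * Complex.log (1-w)) * Fz lam w ^ (-(N:ℤ)) * Sf lam N w
          * ((Fz lam w)⁻¹ * Fz lam w))) * h4
        + (((-Complex.I*(t:ℂ))^N)⁻¹ * Complex.exp (cN N * Complex.log (1-w))
          * Fz lam w ^ (-(N:ℤ)) * Sf lam N w) * e3'
    rw [heq.deriv_eq]
    have hH := (Hstep lam N hz1 hz2 hzf).const_mul (((-Complex.I * (t:ℂ)) ^ (N+1))⁻¹)
    rw [hH.deriv]
    rw [show (-((N+1:ℕ):ℤ)) = -(N:ℤ)-1 by push_cast; ring]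
    ring

end Stmt15

open Stmt15 in
/-- explicit form of the `N`-fold integration-by-parts kernel `L^N h₀`. -/
theorem stmt_15 (N : ℕ) (hN : 1 ≤ N) :
    ∃ A : ℕ → ℕ → ℚ,
      (∀ m n : ℕ, ∃ j : ℕ, (A m n).den = 2 ^ j) ∧
      (∀ m n : ℕ, m ≤ N → n ≤ N → |(A m n : ℝ)| < (Nat.factorial (3 * N) : ℝ)) ∧
      (∀ m < N, A m N = 0) ∧
      A N N = (-1) ^ N * (Nat.doubleFactorial (2 * N - 1) : ℚ) ∧
      ∀ t lam : ℝ, 0 < t → 0 < lam → ∀ z : ℂ,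
        ¬(z.im = 0 ∧ z.re ≤ 0) → ¬(z.im = 0 ∧ 1 ≤ z.re) → Fz lam z ≠ 0 →
        (Lop t lam)^[N] h0 z =
          Complex.exp (-(((2 * N + 1 : ℕ) : ℂ) / 2) * Complex.log (1 - z)) /
              ((-Complex.I * (t : ℂ)) ^ N * Fz lam z ^ N) *
            ∑ m ∈ Finset.range (N + 1), ∑ n ∈ Finset.range (N + 1),
              (A m n : ℂ) * z ^ (-(m : ℤ)) * Fz lam z ^ (-(n : ℤ)) := by
  refine ⟨A N, ?_, ?_, ?_, A_diag N, ?_⟩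
  · intro m n
    obtain ⟨b, hb⟩ := A_dyadic N m n
    have hb2 : A N m n = Rat.divInt b (2^N) := by
      rw [Rat.divInt_eq_div, hb]; push_cast; ring
    have hdvd : ((A N m n).den : ℤ) ∣ ((2:ℤ)^N) := by
      rw [hb2]; exact Rat.den_dvd b (2^N)
    have hdvd' : (A N m n).den ∣ 2^N := by exact_mod_cast hdvd
    obtain ⟨j, _, hje⟩ := (Nat.dvd_prime_pow Nat.prime_two).mp hdvd'
    exact ⟨j, hje⟩
  · intro m n _ _
    have h1 := A_abs_le N m n
    have h2 := B_lt_factorial N hN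
    have h3 : |A N m n| < ((Nat.factorial (3*N) : ℚ)) := lt_of_le_of_lt h1 h2
    exact_mod_cast h3
  · intro m hm
    exact A_zero_of N m N (Or.inr hm)
  · intro t lam ht _ z hA hB hfz
    have hz1 : z ∈ Complex.slitPlane := by
      rw [Complex.mem_slitPlane_iff]
      rcases not_and_or.mp hA with h | h
      · exact Or.inr h
      · exact Or.inl (lt_of_not_ge h)
    have hz2 : (1 - z) ∈ Complex.slitPlane := by
      rw [Complex.mem_slitPlane_iff]
      rcases not_and_or.mp hB with h | h
      · right
        simp only [Complex.sub_im, Complex.one_im, zero_sub, ne_eq, neg_eq_zero]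
        exact h
      · left
        simp only [Complex.sub_re, Complex.one_re]
        have := lt_of_not_ge h
        linarith
    have h := iter_formula t lam (ne_of_gt ht) N (show z ∈ U lam from ⟨hz1, hz2, hfz⟩)
    rw [h]
    simp only [cN]
    have hz : Fz lam z ^ (-(N:ℤ)) = (Fz lam z ^ N)⁻¹ := by rw [zpow_neg, zpow_natCast]
    rw [hz, div_eq_mul_inv]
    unfold Sf
    ring
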